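/- For a smooth solution x = (x_1,...,x_N) of the ODE system ẋ_i = κ Σ_{k∈N_i(t)} (x_k − x_i) with κ > 0 and arbitrary (possibly time-varying) neighbor sets N_i(t) ⊆ {1,...,N}, the convex hull of the agents is non-increasing in time: for all t ≥ t_0, conv{x_i(t) : i ∈ {1,...,N}} ⊆ conv{x_i(t_0) : i ∈ {1,...,N}}. -/

import Mathlib

open Set Real Filter

/-- `(max y 0)^2` is differentiable with derivative `2 * max y 0`. -/
lemma hasDerivAt_posSq (x : ℝ) :
    HasDerivAt (fun y : ℝ => (max y 0) ^ 2) (2 * max x 0) x := by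
  rcases lt_trichotomy x 0 with hx | hx | hx
  · have h : (fun y : ℝ => (max y 0) ^ 2) =ᶠ[nhds x] fun _ => (0 : ℝ) := by
      filter_upwards [Iio_mem_nhds hx] with y hy
      simp [max_eq_right (le_of_lt (Set.mem_Iio.1 hy))]
    have hc : HasDerivAt (fun _ : ℝ => (0 : ℝ)) 0 x := hasDerivAt_const x 0
    have := hc.congr_of_eventuallyEq h
    simpa [max_eq_right hx.le] using this
  · subst hx
    rw [hasDerivAt_iff_isLittleO]
    rw [Asymptotics.isLittleO_iff]
    intro c hc
    filter_upwards [Metric.ball_mem_nhds 0 hc] with y hy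
    have hy' : |y| < c := by simpa [Real.dist_eq] using hy
    have h1 : (max y 0) ^ 2 ≤ |y| * |y| := by
      rcases le_total y 0 with h | h
      · rw [max_eq_right h]
        simpa using mul_nonneg (abs_nonneg y) (abs_nonneg y)
      · rw [max_eq_left h, abs_of_nonneg h]
        nlinarith
    have h2 : |y| * |y| ≤ c * |y| :=
      mul_le_mul_of_nonneg_right hy'.le (abs_nonneg y)
    have h3 : ‖(max y 0) ^ 2 - (max (0:ℝ) 0) ^ 2 - (y - 0) • (2 * max (0:ℝ) 0)‖
        = (max y 0) ^ 2 := by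
      simp [abs_of_nonneg (by positivity : (0:ℝ) ≤ (max y 0) ^ 2)]
    calc ‖(max y 0) ^ 2 - (max (0:ℝ) 0) ^ 2 - (y - 0) • (2 * max (0:ℝ) 0)‖
        = (max y 0) ^ 2 := h3
      _ ≤ c * |y| := h1.trans h2
      _ = c * ‖y - 0‖ := by rw [Real.norm_eq_abs, sub_zero]
  · have h : (fun y : ℝ => (max y 0) ^ 2) =ᶠ[nhds x] fun y => y ^ 2 := by
      filter_upwards [Ioi_mem_nhds hx] with y hy
      simp [max_eq_left (le_of_lt (Set.mem_Ioi.1 hy))]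
    have hp : HasDerivAt (fun y : ℝ => y ^ 2) (2 * x) x := by
      simpa using (hasDerivAt_pow 2 x)
    have := hp.congr_of_eventuallyEq h
    simpa [max_eq_left hx.le] using this

lemma max_mul_self (y : ℝ) : max y 0 * y = (max y 0) ^ 2 := by
  rcases le_total y 0 with h | h
  · simp [max_eq_right h]
  · rw [max_eq_left h]; ring

/-- Core invariance: if each `g i` starts nonpositive and satisfies the consensus ODE,
it stays nonpositive. -/
lemma consensus_nonpos {N : ℕ} {κ : ℝ} (hκ : 0 < κ)
    (g : Fin N → ℝ → ℝ) (Nset : Fin N → ℝ → Finset (Fin N)) (t₀ : ℝ)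
    (hode : ∀ i t, t₀ ≤ t →
      HasDerivAt (g i) (κ * ∑ k ∈ Nset i t, (g k t - g i t)) t)
    (h0 : ∀ i, g i t₀ ≤ 0) :
    ∀ i t, t₀ ≤ t → g i t ≤ 0 := by
  set Φ : ℝ → ℝ := fun t => ∑ i : Fin N, (max (g i t) 0) ^ 2 with hΦ
  set D : ℝ → ℝ := fun t =>
    ∑ i : Fin N, 2 * max (g i t) 0 * (κ * ∑ k ∈ Nset i t, (g k t - g i t)) with hD
  have hΦderiv : ∀ t, t₀ ≤ t → HasDerivAt Φ (D t) t := by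
    intro t ht
    apply HasDerivAt.fun_sum
    intro i _
    exact (hasDerivAt_posSq (g i t)).comp t (hode i t ht)
  have hΦnonneg : ∀ t, 0 ≤ Φ t := by
    intro t
    apply Finset.sum_nonneg
    intro i _
    positivity
  have hbound : ∀ t, t₀ ≤ t → D t ≤ (2 * κ * N) * Φ t := by
    intro t ht
    have key : ∀ i : Fin N,
        2 * max (g i t) 0 * (κ * ∑ k ∈ Nset i t, (g k t - g i t))
          ≤ κ * (N * (max (g i t) 0) ^ 2 + Φ t) := by
      intro i
      set a : Fin N → ℝ := fun k => max (g k t) 0 with ha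
      have step : ∀ k ∈ Nset i t,
          a i * (g k t - g i t) ≤ ((a i) ^ 2 + (a k) ^ 2) / 2 := by
        intro k _
        have h1 : 0 ≤ a i := le_max_right _ _
        have h2 : g k t ≤ a k := le_max_left _ _
        have h3 : a i * g i t = (a i) ^ 2 := max_mul_self (g i t)
        nlinarith [sq_nonneg (a i - a k)]
      have hsum : ∑ k ∈ Nset i t, a i * (g k t - g i t)
          ≤ ∑ k ∈ Nset i t, ((a i) ^ 2 + (a k) ^ 2) / 2 :=
        Finset.sum_le_sum step
      have hsum2 : ∑ k ∈ Nset i t, ((a i) ^ 2 + (a k) ^ 2) / 2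
          ≤ (N * (a i) ^ 2 + Φ t) / 2 := by
        have hcard : (Nset i t).card ≤ N := by
          simpa using Finset.card_le_card (Finset.subset_univ (Nset i t))
        have e1 : ∑ k ∈ Nset i t, ((a i) ^ 2 + (a k) ^ 2) / 2
            = ((Nset i t).card * (a i) ^ 2 + ∑ k ∈ Nset i t, (a k) ^ 2) / 2 := by
          rw [← Finset.sum_div, Finset.sum_add_distrib, Finset.sum_const, nsmul_eq_mul]
        rw [e1]
        have e2 : ∑ k ∈ Nset i t, (a k) ^ 2 ≤ Φ t := by
          apply Finset.sum_le_sum_of_subset_of_nonneg (Finset.subset_univ _)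
          intro k _ _; positivity
        have e3 : ((Nset i t).card : ℝ) * (a i) ^ 2 ≤ N * (a i) ^ 2 := by
          apply mul_le_mul_of_nonneg_right _ (by positivity)
          exact_mod_cast hcard
        linarith
      calc 2 * a i * (κ * ∑ k ∈ Nset i t, (g k t - g i t))
          = 2 * κ * (a i * ∑ k ∈ Nset i t, (g k t - g i t)) := by ring
        _ = 2 * κ * ∑ k ∈ Nset i t, a i * (g k t - g i t) := by
            rw [Finset.mul_sum]
        _ ≤ 2 * κ * ((N * (a i) ^ 2 + Φ t) / 2) := by
            apply mul_le_mul_of_nonneg_left (hsum.trans hsum2) (by positivity)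
        _ = κ * (N * (a i) ^ 2 + Φ t) := by ring
    calc D t ≤ ∑ i : Fin N, κ * (N * (max (g i t) 0) ^ 2 + Φ t) :=
          Finset.sum_le_sum (fun i _ => key i)
      _ = κ * (N * Φ t + N * Φ t) := by
          rw [← Finset.mul_sum]
          congr 1
          rw [Finset.sum_add_distrib, ← Finset.mul_sum, Finset.sum_const,
            Finset.card_univ, Fintype.card_fin, nsmul_eq_mul]
      _ = (2 * κ * N) * Φ t := by ring
  -- Grönwall on [t₀, b]
  have hΦzero : ∀ t, t₀ ≤ t → Φ t ≤ 0 := by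
    intro b hb
    have hcont : ContinuousOn Φ (Icc t₀ b) := by
      intro s hs
      exact ((hΦderiv s hs.1).continuousAt).continuousWithinAt
    have hgron := le_gronwallBound_of_liminf_deriv_right_le (f := Φ) (f' := D)
      (δ := 0) (K := 2 * κ * N) (ε := 0) (a := t₀) (b := b) hcont
      (fun s hs r hr =>
        ((hΦderiv s hs.1).hasDerivWithinAt.liminf_right_slope_le hr))
      (by
        simp only [hΦ]
        rw [show (0:ℝ) = ∑ _i : Fin N, (0:ℝ) by simp]
        apply Finset.sum_le_sum
        intro i _
        have := h0 i
        simp [max_eq_right this])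
      (fun s hs => by simpa using hbound s hs.1)
    have := hgron b ⟨hb, le_refl b⟩
    rwa [gronwallBound_ε0_δ0] at this
  intro i t ht
  have hΦt : Φ t = 0 := le_antisymm (hΦzero t ht) (hΦnonneg t)
  have : (max (g i t) 0) ^ 2 = 0 := by
    have hle : (max (g i t) 0) ^ 2 ≤ Φ t := by
      apply Finset.single_le_sum (f := fun k => (max (g k t) 0) ^ 2)
        (fun k _ => by positivity) (Finset.mem_univ i)
    have hge : 0 ≤ (max (g i t) 0) ^ 2 := by positivity
    linarith [hΦt ▸ hle]
  have : max (g i t) 0 = 0 := by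
    nlinarith [le_max_right (g i t) (0:ℝ)]
  by_contra hgt
  push_neg at hgt
  rw [max_eq_left hgt.le] at this
  exact absurd this (ne_of_gt hgt)

/-- the convex hull of the agents of the first-order consensus
protocol is non-increasing in time. -/
theorem convexHull_shrinks
    {d N : ℕ} (κ : ℝ) (hκ : 0 < κ)
    (x : Fin N → ℝ → EuclideanSpace ℝ (Fin d))
    (Nset : Fin N → ℝ → Finset (Fin N)) (t₀ : ℝ)
    (hode : ∀ i t, t₀ ≤ t →
      HasDerivAt (x i) (κ • ∑ k ∈ Nset i t, (x k t - x i t)) t) :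
    ∀ t, t₀ ≤ t →
      convexHull ℝ (Set.range fun i => x i t) ⊆
        convexHull ℝ (Set.range fun i => x i t₀) := by
  intro t ht
  set C := convexHull ℝ (Set.range fun i => x i t₀) with hC
  have hCconv : Convex ℝ C := convex_convexHull ℝ _
  have hCclosed : IsClosed C :=
    (Set.finite_range _).isCompact_convexHull ℝ |>.isClosed
  apply convexHull_min _ hCconv
  rintro _ ⟨i, rfl⟩
  by_contra hnot
  obtain ⟨f, u, hfa, hfx⟩ := geometric_hahn_banach_closed_point hCconv hCclosed hnot
  set g : Fin N → ℝ → ℝ := fun j s => f (x j s) - u with hg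
  have hgode : ∀ j s, t₀ ≤ s →
      HasDerivAt (g j) (κ * ∑ k ∈ Nset j s, (g k s - g j s)) s := by
    intro j s hs
    have h1 : HasDerivAt (fun r => f (x j r))
        (f (κ • ∑ k ∈ Nset j s, (x k s - x j s))) s :=
      (f.hasFDerivAt.comp_hasDerivAt s (hode j s hs))
    have h2 : f (κ • ∑ k ∈ Nset j s, (x k s - x j s))
        = κ * ∑ k ∈ Nset j s, (g k s - g j s) := by
      rw [map_smul, map_sum]
      simp only [map_sub, smul_eq_mul, hg]
      congr 1
      apply Finset.sum_congr rfl
      intro k _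
      ring
    rw [← h2]
    exact h1.sub_const u
  have hg0 : ∀ j, g j t₀ ≤ 0 := by
    intro j
    have : x j t₀ ∈ C := subset_convexHull ℝ _ ⟨j, rfl⟩
    have := hfa _ this
    simp only [hg]
    linarith
  have := consensus_nonpos hκ g Nset t₀ hgode hg0 i t ht
  simp only [hg] at this
  linarith
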